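/- For each $n\ge 1$, the number of complete sign-coherent fans of rank 2 containing $\mathrm{cone}\{(-1,0),(0,1)\}$ and having exactly $n+3$ maximal cones equals the Catalan number $C_{n-1}=\frac{1}{n}\binom{2n-2}{n-1}$. -/

import Mathlib

namespace Stmt11

def Dt (u v : ℤ × ℤ) : ℤ := u.1 * v.2 - u.2 * v.1
def R (u v : ℤ × ℤ) : Prop := Dt u v = -1
def Q (w : ℤ × ℤ) : Prop := 0 ≤ w.1 ∧ w.2 ≤ 0 ∧ w ≠ 0
def R2 (u v : ℤ × ℤ) : Prop := Q u ∧ Q v ∧ Dt u v < 0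

def Valid (M : List (ℤ × ℤ)) : Prop :=
  (∀ w ∈ M, 0 < w.1 ∧ w.2 < 0) ∧
  List.Chain' R (((1, 0) : ℤ × ℤ) :: M ++ [((0, -1) : ℤ × ℤ)])

lemma cramer1 (u v w : ℤ × ℤ) :
    Dt u v * w.1 = Dt u w * v.1 + Dt w v * u.1 := by simp only [Dt]; ring
lemma cramer2 (u v w : ℤ × ℤ) :
    Dt u v * w.2 = Dt u w * v.2 + Dt w v * u.2 := by simp only [Dt]; ring
lemma dt_swap (u v : ℤ × ℤ) : Dt v u = -Dt u v := by simp only [Dt]; ring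

lemma Q_of_open {w : ℤ × ℤ} (h : 0 < w.1 ∧ w.2 < 0) : Q w := by
  refine ⟨le_of_lt h.1, le_of_lt h.2, ?_⟩
  intro hw; rw [hw] at h; simp at h

lemma dt_trans {u v w : ℤ × ℤ} (hu : Q u) (hv : Q v) (hw : Q w)
    (h1 : Dt u v < 0) (h2 : Dt v w < 0) : Dt u w < 0 := by
  by_contra hc
  push_neg at hc
  have e1 := cramer1 u v w
  have e2 := cramer2 u v w
  have hvw : 0 < Dt w v := by
    have : Dt w v = -Dt v w := by simp [Dt]; ring
    omega
  have hw1 : w.1 = 0 := by nlinarith [hu.1, hu.2.1, hv.1, hv.2.1, hw.1, hw.2.1]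
  have hw2 : w.2 = 0 := by nlinarith [hu.1, hu.2.1, hv.1, hv.2.1, hw.1, hw.2.1]
  exact hw.2.2 (Prod.ext hw1 hw2)

lemma toR2 : ∀ l : List (ℤ × ℤ), (∀ w ∈ l, Q w) → List.Chain' R l → List.Chain' R2 l
  | [] => by simp [List.Chain']
  | [a] => by simp [List.Chain']
  | a :: b :: t => fun hQ hc => by
      simp only [List.Chain', List.isChain_cons_cons] at hc ⊢
      refine ⟨⟨hQ a (by simp), hQ b (by simp), by rw [hc.1]; norm_num⟩,
        toR2 (b :: t) (fun w hw => hQ w (by simp [hw])) hc.2⟩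

lemma chain_pairwise (l : List (ℤ × ℤ)) (hQ : ∀ w ∈ l, Q w) (hc : List.Chain' R l) :
    List.Pairwise (fun u v => Dt u v < 0) l := by
  haveI : IsTrans (ℤ × ℤ) R2 :=
    ⟨fun a b c h1 h2 => ⟨h1.1, h2.2.1, dt_trans h1.1 h1.2.1 h2.2.1 h1.2.2 h2.2.2⟩⟩
  exact (List.isChain_iff_pairwise.mp (toR2 l hQ hc)).imp (fun h => h.2.2)

lemma mediant : ∀ (M : List (ℤ × ℤ)) (u : ℤ × ℤ), Q u →
    (∀ w ∈ M, 0 < w.1 ∧ w.2 < 0) →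
    List.Chain' R (u :: M ++ [((0 : ℤ), (-1 : ℤ))]) →
    Dt u (1, -1) < 0 → M = [] ∨ ((1, -1) : ℤ × ℤ) ∈ M
  | [], _ => fun _ _ _ _ => Or.inl rfl
  | w :: M', u => fun hu hM hc hdu => by
    have hw := hM w (by simp)
    have hcc : R u w ∧ List.Chain' R (w :: M' ++ [((0:ℤ), (-1:ℤ))]) :=
      List.isChain_cons_cons.mp hc
    rcases lt_trichotomy (Dt w (1, -1)) 0 with hlt | heq | hgt
    · rcases mediant M' w (Q_of_open hw) (fun x hx => hM x (by simp [hx]))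
        hcc.2 hlt with rfl | hm
      · exfalso
        have hr : R w (0, -1) := by
          simpa [List.Chain', List.isChain_cons_cons] using hcc.2
        simp only [R, Dt] at hr hlt
        norm_num at hr hlt
        omega
      · exact Or.inr (by simp [hm])
    · right
      have hr : Dt u w = -1 := hcc.1
      simp only [Dt] at heq hr
      norm_num at heq hr
      have hw2 : w.2 = -w.1 := by omega
      have hkey : w.1 * (u.1 + u.2) = 1 := by rw [hw2] at hr; linarith [hr]
      have hw1 : w.1 = 1 := by
        rcases Int.eq_one_of_mul_eq_one_right (le_of_lt hw.1) hkey with h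
        exact h
      have : w = ((1 : ℤ), (-1 : ℤ)) := Prod.ext hw1 (by omega)
      simp [this]
    · exfalso
      have huw : Dt u w = -1 := hcc.1
      have e1 := cramer1 u w (1, -1)
      have e2 := cramer2 u w (1, -1)
      rw [huw, dt_swap w (1, -1)] at e1 e2
      set du := Dt u (1, -1) with hdu'
      set dw := Dt w (1, -1) with hdw'
      norm_num at e1 e2
      have hw1 : 1 ≤ w.1 := hw.1
      have hw2 : w.2 ≤ -1 := by have := hw.2; omega
      have hdu1 : du ≤ -1 := by omega
      have hdw1 : 1 ≤ dw := by omega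
      have h1 : du * w.1 ≤ -1 := by nlinarith
      have h2 : dw * u.1 ≤ 0 := by linarith
      have h3 : 0 ≤ dw * u.1 := mul_nonneg (by omega) hu.1
      have h4 : u.1 = 0 := by
        rcases mul_eq_zero.mp (le_antisymm h2 h3) with h | h
        · omega
        · exact h
      have h5 : u.2 ≤ -1 := by
        rcases lt_or_eq_of_le hu.2.1 with h | h
        · omega
        · exfalso
          exact hu.2.2 (Prod.ext (by simpa using h4) (by simpa using h))
      nlinarith

/-! ### The transfer maps -/

def Am (w : ℤ × ℤ) : ℤ × ℤ := (w.1 + w.2, w.2)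
def Ai (w : ℤ × ℤ) : ℤ × ℤ := (w.1 - w.2, w.2)
def Bm (w : ℤ × ℤ) : ℤ × ℤ := (w.1, w.1 + w.2)
def Bi (w : ℤ × ℤ) : ℤ × ℤ := (w.1, w.2 - w.1)

lemma Ai_Am (w : ℤ × ℤ) : Ai (Am w) = w := by simp [Ai, Am]
lemma Am_Ai (w : ℤ × ℤ) : Am (Ai w) = w := by simp [Ai, Am]
lemma Bi_Bm (w : ℤ × ℤ) : Bi (Bm w) = w := by simp [Bi, Bm]
lemma Bm_Bi (w : ℤ × ℤ) : Bm (Bi w) = w := by simp [Bi, Bm]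

lemma Dt_Am (u v : ℤ × ℤ) : Dt (Am u) (Am v) = Dt u v := by simp [Dt, Am]; ring
lemma Dt_Ai (u v : ℤ × ℤ) : Dt (Ai u) (Ai v) = Dt u v := by simp [Dt, Ai]; ring
lemma Dt_Bm (u v : ℤ × ℤ) : Dt (Bm u) (Bm v) = Dt u v := by simp [Dt, Bm]; ring
lemma Dt_Bi (u v : ℤ × ℤ) : Dt (Bi u) (Bi v) = Dt u v := by simp [Dt, Bi]; ring

lemma chain_map_f (f : ℤ × ℤ → ℤ × ℤ) (hf : ∀ u v, Dt (f u) (f v) = Dt u v)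
    (l : List (ℤ × ℤ)) : List.Chain' R (l.map f) ↔ List.Chain' R l := by
  simp only [List.Chain']; rw [List.isChain_map]
  constructor
  · exact fun h => h.imp (fun a b hab => by show Dt a b = -1; rw [← hf]; exact hab)
  · exact fun h => h.imp (fun a b hab => by show Dt (f a) (f b) = -1; rw [hf]; exact hab)

/-- Splitting a chain at an interior element. -/
lemma chain_split : ∀ (s : List (ℤ × ℤ)) (u m v : ℤ × ℤ) (t : List (ℤ × ℤ)),
    List.Chain' R (u :: (s ++ m :: t) ++ [v]) ↔
      (List.Chain' R (u :: s ++ [m]) ∧ List.Chain' R (m :: t ++ [v]))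
  | [], u, m, v, t => by
    simp [List.Chain', List.isChain_cons_cons, and_assoc]
  | a :: s', u, m, v, t => by
    have ih := chain_split s' a m v t
    simp only [List.cons_append, List.Chain', List.isChain_cons_cons] at ih ⊢
    rw [ih]
    tauto

def glue (M1 M2 : List (ℤ × ℤ)) : List (ℤ × ℤ) :=
  M1.map Ai ++ ((1, -1) : ℤ × ℤ) :: M2.map Bi

lemma glue_valid {M1 M2 : List (ℤ × ℤ)} (h1 : Valid M1) (h2 : Valid M2) :
    Valid (glue M1 M2) := by
  constructor
  · intro w hw
    simp only [glue, List.mem_append, List.mem_cons, List.mem_map] at hw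
    rcases hw with ⟨x, hx, rfl⟩ | rfl | ⟨x, hx, rfl⟩
    · have := h1.1 x hx
      exact ⟨by simp [Ai]; omega, by simp [Ai]; omega⟩
    · norm_num
    · have := h2.1 x hx
      exact ⟨by simp [Bi]; omega, by simp [Bi]; omega⟩
  · show List.Chain' R (((1,0) : ℤ×ℤ) :: (M1.map Ai ++ ((1,-1) : ℤ×ℤ) :: M2.map Bi) ++ [((0,-1) : ℤ×ℤ)])
    rw [chain_split]
    constructor
    · have e : ((1,0) : ℤ×ℤ) :: M1.map Ai ++ [((1,-1) : ℤ×ℤ)] =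
        (((1,0) : ℤ×ℤ) :: M1 ++ [((0,-1) : ℤ×ℤ)]).map Ai := by
        simp [Ai]
      rw [e, chain_map_f Ai Dt_Ai]
      exact h1.2
    · have e : ((1,-1) : ℤ×ℤ) :: M2.map Bi ++ [((0,-1) : ℤ×ℤ)] =
        (((1,0) : ℤ×ℤ) :: M2 ++ [((0,-1) : ℤ×ℤ)]).map Bi := by
        simp [Bi]
      rw [e, chain_map_f Bi Dt_Bi]
      exact h2.2

lemma glue_length (M1 M2 : List (ℤ × ℤ)) :
    (glue M1 M2).length = M1.length + M2.length + 1 := by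
  simp [glue]; omega

lemma not_mem_Ai {M1 : List (ℤ × ℤ)} (h : ∀ w ∈ M1, 0 < w.1 ∧ w.2 < 0) :
    ((1, -1) : ℤ × ℤ) ∉ M1.map Ai := by
  intro hm
  rcases List.mem_map.mp hm with ⟨x, hx, he⟩
  have := h x hx
  simp only [Ai, Prod.ext_iff] at he
  omega

lemma not_mem_Bi {M2 : List (ℤ × ℤ)} (h : ∀ w ∈ M2, 0 < w.1 ∧ w.2 < 0) :
    ((1, -1) : ℤ × ℤ) ∉ M2.map Bi := by
  intro hm
  rcases List.mem_map.mp hm with ⟨x, hx, he⟩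
  have := h x hx
  simp only [Bi, Prod.ext_iff] at he
  omega

lemma append_cons_inj {α : Type*} (a : α) :
    ∀ (s s' t t' : List α), a ∉ s → a ∉ s' →
      s ++ a :: t = s' ++ a :: t' → s = s' ∧ t = t'
  | [], [], t, t', _, _, h => by simpa using h
  | [], b :: s'', t, t', _, hs', h => by
    simp only [List.nil_append, List.cons_append, List.cons.injEq] at h
    exact absurd (List.mem_cons.mpr (Or.inl h.1)) hs'
  | b :: s'', [], t, t', hs, _, h => by
    simp only [List.nil_append, List.cons_append, List.cons.injEq] at h
    exact absurd (List.mem_cons.mpr (Or.inl h.1.symm)) hs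
  | b :: s'', b' :: s''', t, t', hs, hs', h => by
    simp only [List.cons_append, List.cons.injEq] at h
    have := append_cons_inj a s'' s''' t t'
      (fun hm => hs (List.mem_cons_of_mem _ hm))
      (fun hm => hs' (List.mem_cons_of_mem _ hm)) h.2
    exact ⟨by rw [h.1, this.1], this.2⟩

lemma Ai_injective : Function.Injective Ai := fun u v h => by
  have := congrArg Am h; rwa [Am_Ai, Am_Ai] at this

lemma Bi_injective : Function.Injective Bi := fun u v h => by
  have := congrArg Bm h; rwa [Bm_Bi, Bm_Bi] at this

lemma glue_inj {M1 M2 N1 N2 : List (ℤ × ℤ)}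
    (h1 : ∀ w ∈ M1, 0 < w.1 ∧ w.2 < 0) (h2 : ∀ w ∈ M2, 0 < w.1 ∧ w.2 < 0)
    (h1' : ∀ w ∈ N1, 0 < w.1 ∧ w.2 < 0) (h2' : ∀ w ∈ N2, 0 < w.1 ∧ w.2 < 0)
    (h : glue M1 M2 = glue N1 N2) : M1 = N1 ∧ M2 = N2 := by
  have := append_cons_inj ((1,-1) : ℤ × ℤ) (M1.map Ai) (N1.map Ai)
    (M2.map Bi) (N2.map Bi) (not_mem_Ai h1) (not_mem_Ai h1') h
  exact ⟨List.map_injective_iff.mpr Ai_injective this.1,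
    List.map_injective_iff.mpr Bi_injective this.2⟩

lemma map_Ai_Am (l : List (ℤ × ℤ)) : (l.map Am).map Ai = l := by
  rw [List.map_map]
  have : Ai ∘ Am = id := funext Ai_Am
  rw [this, List.map_id]

lemma map_Bi_Bm (l : List (ℤ × ℤ)) : (l.map Bm).map Bi = l := by
  rw [List.map_map]
  have : Bi ∘ Bm = id := funext Bi_Bm
  rw [this, List.map_id]

lemma glue_surj {M : List (ℤ × ℤ)} (hV : Valid M) (hne : M ≠ []) :
    ∃ M1 M2, Valid M1 ∧ Valid M2 ∧ M = glue M1 M2 := by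
  have hm : ((1, -1) : ℤ × ℤ) ∈ M := by
    rcases mediant M (1, 0) ⟨by norm_num, by norm_num, by norm_num⟩ hV.1 hV.2
      (by norm_num [Dt]) with h | h
    · exact absurd h hne
    · exact h
  rcases List.append_of_mem hm with ⟨s, t, rfl⟩
  -- pairwise facts
  have hQall : ∀ w ∈ ((1,0) : ℤ×ℤ) :: (s ++ ((1,-1) : ℤ×ℤ) :: t) ++ [((0,-1) : ℤ×ℤ)], Q w := by
    intro w hw
    simp only [List.cons_append, List.mem_cons, List.mem_append] at hw
    rcases hw with rfl | hw | hw
    · exact ⟨by norm_num, by norm_num, by norm_num⟩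
    · exact Q_of_open (hV.1 w (by simp [List.mem_append]; tauto))
    · have : w = ((0 : ℤ), (-1 : ℤ)) := by simpa using hw
      subst this
      exact ⟨by norm_num, by norm_num, by norm_num⟩
  have hpw := chain_pairwise _ hQall hV.2
  have hpw1 : List.Pairwise (fun u v => Dt u v < 0) (s ++ ((1,-1) : ℤ×ℤ) :: t) := by
    have h1 := (List.pairwise_cons.mp hpw).2
    exact (List.pairwise_append.mp (by simpa using h1)).1
  have hs_lt : ∀ w ∈ s, Dt w (1, -1) < 0 := by
    have := (List.pairwise_append.mp hpw1).2.2
    intro w hw; exact this w hw (1, -1) (by simp)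
  have ht_lt : ∀ w ∈ t, Dt (1, -1) w < 0 := by
    have := List.pairwise_cons.mp (List.pairwise_append.mp hpw1).2.1
    exact this.1
  have hsopen : ∀ w ∈ s, 0 < w.1 ∧ w.2 < 0 := fun w hw => hV.1 w (by simp [hw])
  have htopen : ∀ w ∈ t, 0 < w.1 ∧ w.2 < 0 := fun w hw => hV.1 w (by simp [hw])
  -- split the chain
  have hch := hV.2
  rw [List.cons_append] at hch
  have hsp := (chain_split s ((1,0) : ℤ×ℤ) ((1,-1) : ℤ×ℤ) ((0,-1) : ℤ×ℤ) t).mp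
    (by simpa using hch)
  refine ⟨s.map Am, t.map Bm, ⟨?_, ?_⟩, ⟨?_, ?_⟩, ?_⟩
  · intro w hw
    rcases List.mem_map.mp hw with ⟨x, hx, rfl⟩
    have ho := hsopen x hx
    have hd := hs_lt x hx
    simp only [Dt] at hd; norm_num at hd
    exact ⟨by simp [Am]; omega, by simp [Am]; omega⟩
  · have e : ((1,0) : ℤ×ℤ) :: s.map Am ++ [((0,-1) : ℤ×ℤ)] =
      (((1,0) : ℤ×ℤ) :: s ++ [((1,-1) : ℤ×ℤ)]).map Am := by simp [Am]
    rw [e, chain_map_f Am Dt_Am]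
    exact hsp.1
  · intro w hw
    rcases List.mem_map.mp hw with ⟨x, hx, rfl⟩
    have ho := htopen x hx
    have hd := ht_lt x hx
    simp only [Dt] at hd; norm_num at hd
    exact ⟨by simp [Bm]; omega, by simp [Bm]; omega⟩
  · have e : ((1,0) : ℤ×ℤ) :: t.map Bm ++ [((0,-1) : ℤ×ℤ)] =
      (((1,-1) : ℤ×ℤ) :: t ++ [((0,-1) : ℤ×ℤ)]).map Bm := by simp [Bm]
    rw [e, chain_map_f Bm Dt_Bm]
    exact hsp.2
  · rw [glue, map_Ai_Am, map_Bi_Bm]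

/-! ### Counting -/

lemma catalan_ne_zero (n : ℕ) : catalan n ≠ 0 := by
  have h := succ_mul_catalan_eq_centralBinom n
  have := Nat.centralBinom_pos n
  intro hc
  rw [hc, Nat.mul_zero] at h
  omega

lemma card_S : ∀ k : ℕ, Nat.card {M : List (ℤ × ℤ) // Valid M ∧ M.length = k} = catalan k := by
  intro k
  induction k using Nat.strong_induction_on with
  | _ k ih =>
    match k with
    | 0 =>
      haveI : Unique {M : List (ℤ × ℤ) // Valid M ∧ M.length = 0} := by
        refine ⟨⟨⟨[], ⟨⟨by simp, ?_⟩, rfl⟩⟩⟩, ?_⟩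
        · simp [List.Chain', List.isChain_cons_cons, R, Dt]
        · rintro ⟨M, hM, hl⟩
          exact Subtype.ext (List.length_eq_zero_iff.mp hl)
      rw [Nat.card_unique, catalan_zero]
    | k + 1 =>
      haveI hfin : ∀ i : ℕ, i ≤ k → Finite {M : List (ℤ × ℤ) // Valid M ∧ M.length = i} := by
        intro i hi
        have := ih i (by omega)
        have hne : Nat.card {M : List (ℤ × ℤ) // Valid M ∧ M.length = i} ≠ 0 := by
          rw [this]; exact catalan_ne_zero i
        exact Nat.finite_of_card_ne_zero hne
      haveI : ∀ i : Fin (k + 1), Fintype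
          ({M : List (ℤ × ℤ) // Valid M ∧ M.length = (i : ℕ)} ×
           {M : List (ℤ × ℤ) // Valid M ∧ M.length = k - (i : ℕ)}) := by
        intro i
        haveI := hfin i (by omega)
        haveI := hfin (k - (i : ℕ)) (by omega)
        exact Fintype.ofFinite _
      set F : (Σ i : Fin (k + 1),
          {M : List (ℤ × ℤ) // Valid M ∧ M.length = (i : ℕ)} ×
          {M : List (ℤ × ℤ) // Valid M ∧ M.length = k - (i : ℕ)}) →
          {M : List (ℤ × ℤ) // Valid M ∧ M.length = k + 1} :=
        fun p => ⟨glue p.2.1.1 p.2.2.1,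
          glue_valid p.2.1.2.1 p.2.2.2.1, by
            rw [glue_length, p.2.1.2.2, p.2.2.2.2]
            have := p.1.isLt
            omega⟩ with hF
      have hbij : Function.Bijective F := by
        constructor
        · rintro ⟨i, ⟨M1, hM1⟩, ⟨M2, hM2⟩⟩ ⟨j, ⟨N1, hN1⟩, ⟨N2, hN2⟩⟩ h
          have hg : glue M1 M2 = glue N1 N2 := congrArg Subtype.val h
          have := glue_inj hM1.1.1 hM2.1.1 hN1.1.1 hN2.1.1 hg
          obtain ⟨e1, e2⟩ := this
          have hij : i = j := Fin.ext (by rw [← hM1.2, ← hN1.2, e1])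
          subst hij
          subst e1; subst e2
          rfl
        · rintro ⟨M, hV, hl⟩
          have hne : M ≠ [] := by intro h; rw [h] at hl; simp at hl
          rcases glue_surj hV hne with ⟨M1, M2, h1, h2, rfl⟩
          have hlen := glue_length M1 M2
          rw [hl] at hlen
          refine ⟨⟨⟨M1.length, by omega⟩, ⟨⟨M1, h1, rfl⟩, ⟨M2, h2, by simp; omega⟩⟩⟩, rfl⟩
      have hcard := Nat.card_eq_of_bijective F hbij
      rw [← hcard]
      rw [Nat.card_eq_fintype_card, Fintype.card_sigma]
      rw [catalan_succ]
      apply Finset.sum_congr rfl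
      intro i _
      rw [← Nat.card_eq_fintype_card, Nat.card_prod,
        ih (i : ℕ) (by omega), ih (k - (i : ℕ)) (by omega)]

lemma chain_snoc (l : List (ℤ × ℤ)) (a b : ℤ × ℤ) :
    List.Chain' R ((l ++ [a]) ++ [b]) ↔ List.Chain' R (l ++ [a]) ∧ R a b := by
  simp only [List.Chain']; rw [List.isChain_append]
  simp [List.getLast?_concat]

end Stmt11

/-- For each `n ≥ 1`, the number of complete sign-coherent fans of
rank 2 containing `cone{(-1,0),(0,1)}` and having exactly `n+3` maximal cones equals the
Catalan number `C_(n-1)`.  Such a fan is encoded by its list `M` of rays in the open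
fourth quadrant (the full clockwise ray list being `(1,0), M, (0,-1), (-1,0), (0,1)`,
with consecutive rays forming a clockwise `ℤ`-basis); it has `M.length + 4` maximal
cones. -/
theorem stmt_11 (n : ℕ) (hn : 1 ≤ n) :
    Nat.card {M : List (ℤ × ℤ) //
      (∀ w ∈ M, 0 < w.1 ∧ w.2 < 0) ∧
      List.Chain' (fun u v : ℤ × ℤ => u.1 * v.2 - u.2 * v.1 = -1)
        (((1, 0) : ℤ × ℤ) :: M ++ [(0, -1), (-1, 0), (0, 1)]) ∧
      M.length + 4 = n + 3} = catalan (n - 1) := by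
  rw [← Stmt11.card_S (n - 1)]
  apply Nat.card_congr
  apply Equiv.subtypeEquivRight
  intro M
  have hext : List.Chain' Stmt11.R (((1, 0) : ℤ × ℤ) :: M ++ [(0, -1), (-1, 0), (0, 1)]) ↔
      List.Chain' Stmt11.R (((1, 0) : ℤ × ℤ) :: M ++ [((0, -1) : ℤ × ℤ)]) := by
    have e : ((1, 0) : ℤ × ℤ) :: M ++ [(0, -1), (-1, 0), (0, 1)] =
        (((((1, 0) : ℤ × ℤ) :: M) ++ [((0, -1) : ℤ × ℤ)]) ++ [((-1, 0) : ℤ × ℤ)]) ++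
          [((0, 1) : ℤ × ℤ)] := by simp
    rw [e, Stmt11.chain_snoc, Stmt11.chain_snoc]
    have r1 : Stmt11.R ((0 : ℤ), (-1 : ℤ)) ((-1 : ℤ), (0 : ℤ)) := by norm_num [Stmt11.R, Stmt11.Dt]
    have r2 : Stmt11.R ((-1 : ℤ), (0 : ℤ)) ((0 : ℤ), (1 : ℤ)) := by norm_num [Stmt11.R, Stmt11.Dt]
    simp [r1, r2, List.cons_append]
  constructor
  · rintro ⟨hpos, hch, hlen⟩
    exact ⟨⟨hpos, hext.mp hch⟩, by omega⟩
  · rintro ⟨⟨hpos, hch⟩, hlen⟩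
    exact ⟨hpos, hext.mpr hch, by omega⟩
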